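/- Let F be ℝ or ℂ and let m, n be positive integers. Let P = I_{mn} + Σ_{j=1}^r A_j ⊗ B_j with A_j ∈ M_m(F), B_j ∈ M_n(F), where {A_1,…,A_r} is linearly independent and {B_1,…,B_r} is linearly independent (as holds when r is the tensor rank of P − I_{mn} over M_m ⊗ M_n). Let φ : M_{mn}(F) → M_{mn}(F) be φ(M) = PM. Then tr(φ(A ⊕ B)) = tr(A ⊕ B) for all A ∈ M_m(F) and B ∈ M_n(F) if and only if tr(A_j) = 0 and tr(B_j) = 0 for all j = 1,…,r. -/

import Mathlib

open Matrix Kronecker BigOperators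

/-- The Kronecker sum `A ⊕ B = A ⊗ Iₙ + Iₘ ⊗ B`. -/
def kronSum {F : Type*} [CommRing F] {m n : ℕ}
    (A : Matrix (Fin m) (Fin m) F) (B : Matrix (Fin n) (Fin n) F) :
    Matrix (Fin m × Fin n) (Fin m × Fin n) F :=
  A ⊗ₖ (1 : Matrix (Fin n) (Fin n) F) + (1 : Matrix (Fin m) (Fin m) F) ⊗ₖ B

/-- The first partial trace `tr₁(P) = Σⱼ Pⱼⱼ` (sum of the diagonal blocks). -/
def ptrace1 {F : Type*} [AddCommMonoid F] {m n : ℕ}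
    (P : Matrix (Fin m × Fin n) (Fin m × Fin n) F) :
    Matrix (Fin n) (Fin n) F :=
  Matrix.of fun a b => ∑ k : Fin m, P (k, a) (k, b)

/-- The second partial trace `tr₂(P) = Σ_{k,l} tr(P_{kl}) E_{kl}` (blockwise trace). -/
def ptrace2 {F : Type*} [AddCommMonoid F] {m n : ℕ}
    (P : Matrix (Fin m × Fin n) (Fin m × Fin n) F) :
    Matrix (Fin m) (Fin m) F :=
  Matrix.of fun k l => ∑ a : Fin n, P (k, a) (l, a)

/-- Corollary 3.2: for `P = I + Σⱼ Aⱼ ⊗ Bⱼ` with the `Aⱼ` and the `Bⱼ` linearly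
independent families, `φ(M) = P·M` preserves the trace of all Kronecker sums
iff every `Aⱼ` and every `Bⱼ` is traceless. -/

private lemma aux_trace_zero {F : Type*} [Field F] {m r : ℕ}
    (A : Fin r → Matrix (Fin m) (Fin m) F) (hA : LinearIndependent F A)
    (c : Fin r → F) (h : ∀ X, ∑ j : Fin r, c j * (A j * X).trace = 0) :
    ∀ j, c j = 0 := by
  apply Fintype.linearIndependent_iff.mp hA
  ext a b
  have hX := h (single b a 1)
  have : (∑ j : Fin r, c j • A j) a b = ∑ j : Fin r, c j * (A j * single b a 1).trace := by
    simp only [Matrix.sum_apply, Matrix.smul_apply, smul_eq_mul]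
    refine Finset.sum_congr rfl fun j _ => ?_
    congr 1
    simp [Matrix.trace, Matrix.diag, Matrix.mul_apply, Matrix.single, ite_and,
      Finset.sum_ite_eq, Finset.sum_ite_eq']
  simp [this, hX]

theorem trace_kronSum_preserved_mul_left_iff_traceless
    {F : Type*} [RCLike F] {m n r : ℕ} (hm : 0 < m) (hn : 0 < n)
    (A : Fin r → Matrix (Fin m) (Fin m) F) (B : Fin r → Matrix (Fin n) (Fin n) F)
    (hA : LinearIndependent F A) (hB : LinearIndependent F B)
    (P : Matrix (Fin m × Fin n) (Fin m × Fin n) F)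
    (hP : P = 1 + ∑ j : Fin r, A j ⊗ₖ B j) :
    (∀ (X : Matrix (Fin m) (Fin m) F) (Y : Matrix (Fin n) (Fin n) F),
        (P * kronSum X Y).trace = (kronSum X Y).trace) ↔
      (∀ j : Fin r, (A j).trace = 0 ∧ (B j).trace = 0) := by
  have key : ∀ (X : Matrix (Fin m) (Fin m) F) (Y : Matrix (Fin n) (Fin n) F),
      (P * kronSum X Y).trace = (kronSum X Y).trace +
        ∑ j : Fin r, ((A j * X).trace * (B j).trace + (A j).trace * (B j * Y).trace) := by
    intro X Y
    subst hP
    simp only [kronSum, add_mul, Finset.sum_mul, mul_add, one_mul,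
      ← Matrix.mul_kronecker_mul, Matrix.mul_one, Matrix.one_mul, Matrix.trace_add,
      Matrix.trace_sum, Matrix.trace_kronecker]
    rw [Finset.sum_add_distrib]
    ring
  constructor
  · intro h
    have h0 : ∀ (X : Matrix (Fin m) (Fin m) F) (Y : Matrix (Fin n) (Fin n) F),
        ∑ j : Fin r, ((A j * X).trace * (B j).trace + (A j).trace * (B j * Y).trace) = 0 := by
      intro X Y
      have h' := (key X Y).symm.trans (h X Y)
      linear_combination h'
    have hBtr : ∀ j, (B j).trace = 0 := by
      apply aux_trace_zero A hA
      intro X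
      have := h0 X 0
      simpa [mul_comm] using this
    have hAtr : ∀ j, (A j).trace = 0 := by
      apply aux_trace_zero B hB
      intro Y
      have := h0 0 Y
      simpa using this
    exact fun j => ⟨hAtr j, hBtr j⟩
  · intro h X Y
    rw [key X Y]
    have : ∀ j : Fin r, ((A j * X).trace * (B j).trace + (A j).trace * (B j * Y).trace) = 0 := by
      intro j
      rw [(h j).1, (h j).2]
      ring
    simp [this]
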